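/- arXiv:2203.14131 — 3 statements merged into one kernel-verified Lean document; each statement's English description precedes it below -/
import Mathlib

section
/- Let p be a prime and let E/F be a weakly ramified finite Galois extension of p-adic fields of odd degree, with Galois group Γ, inertia subgroup Δ = Γ₀ and first ramification group Γ₁. Then Δ is abelian if and only if it is either a p-group (in which case Δ = Γ₁) or cyclic and of order prime to p. -/
set_option synthInstance.maxHeartbeats 1000000
set_option maxHeartbeats 1000000
set_option linter.unusedSectionVars false

/-- The `i`-th ramification group (in the lower numbering, for `i ≥ 0`) of a Galois extension
`E/F` of `p`-adic fields, viewed as a subset of the Galois group: it consists of those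
automorphisms `σ` with `v_E(σ x - x) ≥ i + 1` for all `x` in the ring of integers `O_E`
(the integral closure of `ℤ_p` in `E`), i.e. `σ x - x ∈ 𝔪_E ^ (i + 1)` for all `x ∈ O_E`.
In particular `ramificationSet p F E 0` is the inertia subgroup `Δ = Γ₀`. -/
def ramificationSet (p : ℕ) [Fact p.Prime] (F E : Type) [Field F] [Field E]
    [Algebra ℤ_[p] E] [Algebra F E] [IsLocalRing (integralClosure ℤ_[p] E)] (i : ℕ) :
    Set (E ≃ₐ[F] E) :=
  {σ | ∀ x : integralClosure ℤ_[p] E,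
    ∃ y : integralClosure ℤ_[p] E,
      y ∈ (IsLocalRing.maximalIdeal (integralClosure ℤ_[p] E)) ^ (i + 1) ∧
      (y : E) = σ (x : E) - (x : E)}

namespace RamAux

variable (p : ℕ) [Fact p.Prime] (F E : Type) [Field F] [Field E]
    [Algebra ℚ_[p] F] [FiniteDimensional ℚ_[p] F]
    [Algebra ℚ_[p] E] [FiniteDimensional ℚ_[p] E]
    [Algebra ℤ_[p] E] [IsScalarTower ℤ_[p] ℚ_[p] E]
    [Algebra F E] [IsScalarTower ℚ_[p] F E]
    [FiniteDimensional F E] [IsGalois F E]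
    [IsLocalRing (integralClosure ℤ_[p] E)]

local notation "𝒪" => integralClosure ℤ_[p] E
local notation "𝔪" => IsLocalRing.maximalIdeal 𝒪
local notation "𝕜" => IsLocalRing.ResidueField 𝒪
local notation "ρ" => IsLocalRing.residue 𝒪
local notation "gr" => fun σ : E ≃ₐ[F] E =>
  galRestrict ℤ_[p] ℚ_[p] E 𝒪 (AlgEquiv.restrictScalars ℚ_[p] σ)

variable {p F E}

/-! ### Basic facts about the galois action on `𝒪` -/

lemma coe_gr (σ : E ≃ₐ[F] E) (x : 𝒪) : ((gr σ) x : E) = σ (x : E) := by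
  have := algebraMap_galRestrict_apply ℤ_[p] (K := ℚ_[p]) (L := E) (B := 𝒪)
    (AlgEquiv.restrictScalars ℚ_[p] σ) x
  simpa using this

lemma gr_mul (σ τ : E ≃ₐ[F] E) (x : 𝒪) : (gr (σ * τ)) x = (gr σ) ((gr τ) x) := by
  apply Subtype.coe_injective
  simp [coe_gr]

lemma gr_one (x : 𝒪) : (gr (1 : E ≃ₐ[F] E)) x = x := by
  apply Subtype.coe_injective
  simp [coe_gr]

lemma gr_inv (σ : E ≃ₐ[F] E) (x : 𝒪) : (gr σ) ((gr σ⁻¹) x) = x := by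
  rw [← gr_mul]; simp [gr_one]

lemma mem_ram_iff {σ : E ≃ₐ[F] E} {i : ℕ} :
    σ ∈ ramificationSet p F E i ↔ ∀ x : 𝒪, (gr σ) x - x ∈ 𝔪 ^ (i + 1) := by
  constructor
  · intro h x
    obtain ⟨y, hy1, hy2⟩ := h x
    have : y = (gr σ) x - x := by
      apply Subtype.coe_injective
      push_cast
      rw [hy2, coe_gr]
    rwa [this] at hy1
  · intro h x
    exact ⟨(gr σ) x - x, h x, by push_cast [coe_gr]; ring⟩

lemma gr_mem_m (σ : E ≃ₐ[F] E) {x : 𝒪} (hx : x ∈ 𝔪) : (gr σ) x ∈ 𝔪 := by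
  rw [IsLocalRing.mem_maximalIdeal, mem_nonunits_iff] at *
  intro h
  apply hx
  have : x = (gr σ⁻¹) ((gr σ) x) := by
    rw [← gr_mul]; simp [gr_one]
  rw [this]
  exact h.map _

/-! ### The ring of integers is a local Dedekind domain, with uniformizer `π` -/

include p in
lemma charZeroE : CharZero E := by
  exact charZero_of_injective_algebraMap (algebraMap ℚ_[p] E).injective

lemma p_mem_m : (p : 𝒪) ∈ 𝔪 := by
  haveI := charZeroE (p := p) (E := E)
  rw [IsLocalRing.mem_maximalIdeal, mem_nonunits_iff]
  rintro h
  obtain ⟨t, ht⟩ := isUnit_iff_exists_inv.mp h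
  have htE : (p : E) * (t : E) = 1 := by
    have := congrArg (fun z : 𝒪 => (z : E)) ht
    push_cast at this
    simpa using this
  have hpE : (p : E) ≠ 0 := by
    exact_mod_cast (Nat.cast_ne_zero (R := E)).mpr (Nat.Prime.ne_zero Fact.out)
  have htinv : (t : E) = algebraMap ℚ_[p] E ((p : ℚ_[p])⁻¹) := by
    rw [map_inv₀, map_natCast]
    field_simp at htE ⊢
    linear_combination htE
  have hint : IsIntegral ℤ_[p] ((p : ℚ_[p])⁻¹) := by
    apply IsIntegral.tower_bot (A := ℚ_[p]) (B := E) (algebraMap ℚ_[p] E).injective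
    rw [← htinv]
    exact t.2
  obtain ⟨y, hy⟩ := IsIntegrallyClosed.isIntegral_iff.mp hint
  have : IsUnit (p : ℤ_[p]) := by
    refine isUnit_iff_exists_inv'.mpr ⟨y, ?_⟩
    have : algebraMap ℤ_[p] ℚ_[p] (y * p) = algebraMap ℤ_[p] ℚ_[p] 1 := by
      push_cast [map_mul, hy]
      field_simp
      exact div_self (Nat.cast_ne_zero.mpr (Nat.Prime.ne_zero Fact.out))
    exact (IsFractionRing.injective ℤ_[p] ℚ_[p]) this
  rw [PadicInt.isUnit_iff] at this
  have hlt : ‖(p : ℤ_[p])‖ < 1 := by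
    rw [PadicInt.norm_p]
    have h2 : (1:ℝ) < p := by exact_mod_cast Nat.Prime.one_lt Fact.out
    rw [inv_lt_one_iff₀]; right; exact h2
  rw [this] at hlt; exact lt_irrefl _ hlt

lemma p_ne_zero_O : (p : 𝒪) ≠ 0 := by
  haveI := charZeroE (p := p) (E := E)
  intro h
  have := congrArg (fun z : 𝒪 => (z : E)) h
  push_cast at this
  exact (Nat.cast_ne_zero (R := E)).mpr (Nat.Prime.ne_zero Fact.out) (by simpa using this)

lemma exists_uniformizer : ∃ π : 𝒪, 𝔪 = Ideal.span {π} := by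
  have : IsDedekindDomain 𝒪 := integralClosure.isDedekindDomain ℤ_[p] ℚ_[p] E
  obtain ⟨π, hπ⟩ := (maximalIdeal_isPrincipal_of_isDedekindDomain (R := 𝒪))
  exact ⟨π, hπ⟩

lemma pi_ne_zero {π : 𝒪} (hπ : 𝔪 = Ideal.span {π}) : π ≠ 0 := by
  intro h
  have hm := p_mem_m (p := p) (E := E)
  rw [hπ, h, Ideal.span_singleton_eq_bot.mpr rfl] at hm
  exact p_ne_zero_O (Ideal.mem_bot.mp hm)

lemma pi_not_unit {π : 𝒪} (hπ : 𝔪 = Ideal.span {π}) : ¬ IsUnit π :=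
  (IsLocalRing.mem_maximalIdeal π).mp (hπ ▸ Ideal.mem_span_singleton_self π)

lemma mem_pow_iff {π : 𝒪} (hπ : 𝔪 = Ideal.span {π}) {j : ℕ} {x : 𝒪} :
    x ∈ 𝔪 ^ j ↔ π ^ j ∣ x := by
  rw [hπ, Ideal.span_singleton_pow, Ideal.mem_span_singleton]

lemma pi_mem {π : 𝒪} (hπ : 𝔪 = Ideal.span {π}) : π ∈ 𝔪 :=
  hπ ▸ Ideal.mem_span_singleton_self π

/-! ### Valuation-theoretic estimates -/

lemma gr_mem_pow {π : 𝒪} (hπ : 𝔪 = Ideal.span {π}) (σ : E ≃ₐ[F] E) {j : ℕ} {x : 𝒪}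
    (hx : x ∈ 𝔪 ^ j) : (gr σ) x ∈ 𝔪 ^ j := by
  obtain ⟨c, rfl⟩ := (mem_pow_iff hπ).mp hx
  rw [map_mul, map_pow]
  exact Ideal.mul_mem_right _ _ (Ideal.pow_mem_pow (gr_mem_m σ (pi_mem hπ)) j)

lemma deriv_mem {π : 𝒪} (hπ : 𝔪 = Ideal.span {π}) {σ : E ≃ₐ[F] E} {i : ℕ}
    (hσ : ∀ x : 𝒪, (gr σ) x - x ∈ 𝔪 ^ (i + 1)) :
    ∀ (j : ℕ) (x : 𝒪), x ∈ 𝔪 ^ j → (gr σ) x - x ∈ 𝔪 ^ (i + j) := by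
  intro j
  induction j with
  | zero => exact fun x _ => Ideal.pow_le_pow_right (by omega) (hσ x)
  | succ j ih =>
    intro x hx
    obtain ⟨c, rfl⟩ := (mem_pow_iff hπ).mp hx
    have hsplit : (π : 𝒪) ^ (j + 1) * c = (π ^ j * c) * π := by ring
    rw [hsplit]
    set y := π ^ j * c with hy
    have hym : y ∈ 𝔪 ^ j := (mem_pow_iff hπ).mpr ⟨c, rfl⟩
    have key : (gr σ) (y * π) - y * π
        = ((gr σ) y - y) * ((gr σ) π) + y * ((gr σ) π - π) := by
      rw [map_mul]; ring
    rw [key]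
    apply Ideal.add_mem
    · have := Ideal.mul_mem_mul (ih y hym) (gr_mem_m σ (pi_mem hπ))
      rwa [← pow_succ, show i + j + 1 = i + (j+1) by omega] at this
    · have := Ideal.mul_mem_mul hym (hσ π)
      rwa [← pow_add, show j + (i + 1) = i + (j+1) by omega] at this

lemma step_up {π : 𝒪} (hπ : 𝔪 = Ideal.span {π})
    (hfrob : ∀ x : 𝒪, ∃ y : 𝒪, x - y ^ p ∈ 𝔪)
    {σ : E ≃ₐ[F] E} {i : ℕ}
    (hσ : ∀ x : 𝒪, (gr σ) x - x ∈ 𝔪 ^ (i + 1))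
    (hπσ : (gr σ) π - π ∈ 𝔪 ^ (i + 2)) :
    ∀ x : 𝒪, (gr σ) x - x ∈ 𝔪 ^ (i + 2) := by
  have hp2 : 2 ≤ p := Nat.Prime.two_le Fact.out
  intro x
  obtain ⟨y, hy⟩ := hfrob x
  obtain ⟨c, hc⟩ := (mem_pow_iff hπ (j := 1)).mp (by simpa using hy)
  rw [pow_one] at hc
  have hx : x = y ^ p + π * c := by linear_combination hc
  have hmain : (gr σ) x - x
      = (((gr σ) y) ^ p - y ^ p)
        + (((gr σ) c - c) * ((gr σ) π) + c * ((gr σ) π - π)) := by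
    rw [hx, map_add, map_mul, map_pow]; ring
  rw [hmain]
  apply Ideal.add_mem
  · set d := (gr σ) y - y with hd
    have hdm : d ∈ 𝔪 ^ (i + 1) := hσ y
    have hgy : (gr σ) y = y + d := by rw [hd]; ring
    rw [hgy, add_pow]
    rw [Finset.sum_range_succ]
    have hlast : y ^ p * d ^ (p - p) * (p.choose p : 𝒪) = y ^ p := by
      simp [Nat.choose_self]
    rw [hlast, add_sub_cancel_right]
    apply Ideal.sum_mem
    intro k hk
    rw [Finset.mem_range] at hk
    have hdpk : d ^ (p - k) ∈ 𝔪 ^ ((i+1) * (p - k)) := by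
      rw [pow_mul]
      exact Ideal.pow_mem_pow hdm (p - k)
    by_cases hk0 : k = 0
    · subst hk0
      have h1 : d ^ (p - 0) ∈ 𝔪 ^ (i + 2) := by
        refine Ideal.pow_le_pow_right ?_ hdpk
        have : 1 ≤ p - 0 := by omega
        nlinarith [Nat.sub_zero p ▸ hp2]
      have : (y : 𝒪) ^ 0 * d ^ (p - 0) * (p.choose 0 : 𝒪) = d ^ (p - 0) := by
        simp
      rw [this]; exact h1
    · obtain ⟨t, ht⟩ := Nat.Prime.dvd_choose_self Fact.out hk0 hk
      have hcast : (p.choose k : 𝒪) = (p : 𝒪) * (t : 𝒪) := by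
        rw [ht]; push_cast; ring
      rw [hcast]
      have h1 : d ^ (p - k) ∈ 𝔪 ^ (i + 1) := by
        refine Ideal.pow_le_pow_right ?_ hdpk
        have h2 : 1 ≤ p - k := by omega
        nlinarith
      have h2 : d ^ (p - k) * (p : 𝒪) ∈ 𝔪 ^ (i + 2) := by
        have := Ideal.mul_mem_mul h1 (p_mem_m (p := p) (E := E))
        rwa [← pow_succ] at this
      have : y ^ k * d ^ (p - k) * ((p : 𝒪) * t) = (y ^ k * t) * (d ^ (p - k) * (p : 𝒪)) := by
        ring
      rw [this]
      exact Ideal.mul_mem_left _ _ h2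
  · apply Ideal.add_mem
    · have h1 : (gr σ) c - c ∈ 𝔪 ^ (i + 1) := hσ c
      have := Ideal.mul_mem_mul h1 (gr_mem_m σ (pi_mem hπ))
      rwa [← pow_succ] at this
    · exact Ideal.mul_mem_left _ _ hπσ

/-! ### Residue field -/

include p in
lemma finite_residue : Finite 𝕜 := by
  haveI : IsNoetherian ℤ_[p] 𝒪 := IsIntegralClosure.isNoetherian ℤ_[p] ℚ_[p] E _
  haveI : Module.Finite ℤ_[p] 𝒪 := ⟨IsNoetherian.noetherian ⊤⟩
  obtain ⟨s, hs⟩ := (Module.Finite.fg_top (R := ℤ_[p]) (M := 𝒪) : (⊤ : Submodule ℤ_[p] 𝒪).FG)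
  refine Finite.of_surjective
    (f := fun (a : {x // x ∈ s} → ZMod p) =>
      ρ (∑ i : {x // x ∈ s}, (((a i).val : ℕ) : 𝒪) * (i : 𝒪))) ?_
  intro z
  obtain ⟨x, rfl⟩ := Ideal.Quotient.mk_surjective z
  have hx : x ∈ Submodule.span ℤ_[p] (s : Set 𝒪) := by rw [hs]; trivial
  obtain ⟨f, -, hf⟩ := Submodule.mem_span_finset.mp (by simpa using hx)
  refine ⟨fun i => PadicInt.toZMod (f (i : 𝒪)), ?_⟩
  have key : (∑ i : {x // x ∈ s}, (((PadicInt.toZMod (f (i : 𝒪))).val : ℕ) : 𝒪) * (i : 𝒪)) - x ∈ 𝔪 := by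
    rw [← hf]
    rw [← Finset.sum_attach s (fun a => f a • a)]
    rw [Finset.univ_eq_attach, ← Finset.sum_sub_distrib]
    apply Ideal.sum_mem
    intro i _
    have hspec := PadicInt.toZMod_spec (f i)
    rw [PadicInt.maximalIdeal_eq_span_p, Ideal.mem_span_singleton] at hspec
    obtain ⟨d, hd⟩ := hspec
    have : (((PadicInt.toZMod (f ↑i)).val : ℕ) : 𝒪) * (i : 𝒪) - f ↑i • (i : 𝒪)
        = -((algebraMap ℤ_[p] 𝒪 ((p : ℤ_[p]) * d)) * (i : 𝒪)) := by
      rw [Algebra.smul_def, ← hd, map_sub,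
        ← ZMod.natCast_val (n := p) (R := ℤ_[p]), map_natCast]
      ring
    rw [this]
    apply neg_mem
    apply Ideal.mul_mem_right
    rw [map_mul, map_natCast]
    exact Ideal.mul_mem_right _ _ p_mem_m
  have := Ideal.Quotient.eq.mpr key
  exact this

include p in
lemma charP_residue : CharP 𝕜 p := by
  haveI : Nontrivial 𝕜 := inferInstance
  apply ringChar.of_eq
  apply CharP.ringChar_of_prime_eq_zero Fact.out
  rw [← map_natCast ρ p]
  exact Ideal.Quotient.eq_zero_iff_mem.mpr p_mem_m

include p in
lemma frob_surj : ∀ x : 𝒪, ∃ y : 𝒪, x - y ^ p ∈ 𝔪 := by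
  haveI := finite_residue (p := p) (E := E)
  haveI := charP_residue (p := p) (E := E)
  haveI : ExpChar 𝕜 p := ExpChar.prime Fact.out
  intro x
  obtain ⟨w, hw⟩ := surjective_frobenius 𝕜 p (ρ x)
  obtain ⟨y, rfl⟩ := Ideal.Quotient.mk_surjective w
  refine ⟨y, ?_⟩
  rw [← Ideal.Quotient.eq_zero_iff_mem]
  have h2 : (ρ (x - y ^ p)) = ρ x - (ρ y) ^ p := by
    simp [map_sub, map_pow]
  replace hw : (ρ y) ^ p = ρ x := hw
  show ρ (x - y ^ p) = 0
  rw [h2, ← hw]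
  show (ρ y) ^ p - (ρ y) ^ p = 0
  ring

/-! ### Subgroup structure of the ramification sets -/

lemma one_mem_ram (i : ℕ) : (1 : E ≃ₐ[F] E) ∈ ramificationSet p F E i := by
  rw [mem_ram_iff]
  intro x
  rw [gr_one, sub_self]
  exact Ideal.zero_mem _

lemma mul_mem_ram {i : ℕ} {σ τ : E ≃ₐ[F] E} (hσ : σ ∈ ramificationSet p F E i)
    (hτ : τ ∈ ramificationSet p F E i) : σ * τ ∈ ramificationSet p F E i := by
  rw [mem_ram_iff] at *
  intro x
  have : (gr (σ * τ)) x - x = ((gr σ) ((gr τ) x) - (gr τ) x) + ((gr τ) x - x) := by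
    rw [gr_mul]; ring
  rw [this]
  exact Ideal.add_mem _ (hσ _) (hτ _)

lemma inv_mem_ram {i : ℕ} {σ : E ≃ₐ[F] E} (hσ : σ ∈ ramificationSet p F E i) :
    σ⁻¹ ∈ ramificationSet p F E i := by
  rw [mem_ram_iff] at *
  intro x
  have : (gr σ⁻¹) x - x = -((gr σ) ((gr σ⁻¹) x) - ((gr σ⁻¹) x)) := by
    rw [gr_inv]; ring
  rw [this]
  exact neg_mem (hσ _)

lemma ram_le {i j : ℕ} (h : j ≤ i) :
    ramificationSet p F E i ⊆ ramificationSet p F E j := by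
  intro σ hσ
  rw [mem_ram_iff] at *
  exact fun x => Ideal.pow_le_pow_right (by omega) (hσ x)

lemma pow_mem_ram {i : ℕ} {σ : E ≃ₐ[F] E} (hσ : σ ∈ ramificationSet p F E i) (n : ℕ) :
    σ ^ n ∈ ramificationSet p F E i := by
  induction n with
  | zero => simpa using one_mem_ram i
  | succ n ih => rw [pow_succ]; exact mul_mem_ram ih hσ

/-! ### Commutators of `Γ₁` land in `Γ₂` -/

lemma commutator_mem {π : 𝒪} (hπ : 𝔪 = Ideal.span {π}) {σ τ : E ≃ₐ[F] E}
    (hσ : σ ∈ ramificationSet p F E 1) (hτ : τ ∈ ramificationSet p F E 1) :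
    σ * τ * σ⁻¹ * τ⁻¹ ∈ ramificationSet p F E 2 := by
  rw [mem_ram_iff] at *
  intro x
  set y := (gr σ⁻¹) ((gr τ⁻¹) x) with hy
  have hx1 : (gr (σ * τ * σ⁻¹ * τ⁻¹)) x = (gr σ) ((gr τ) y) := by
    rw [gr_mul, gr_mul, gr_mul]
  have hx2 : (gr τ) ((gr σ) y) = x := by
    rw [hy]
    have h1 : (gr σ) ((gr σ⁻¹) ((gr τ⁻¹) x)) = (gr τ⁻¹) x := gr_inv σ _
    rw [h1]
    exact gr_inv τ x
  have hD1 : (gr σ) ((gr τ) y - y) - ((gr τ) y - y) ∈ 𝔪 ^ (1 + 2) :=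
    deriv_mem hπ hσ 2 _ (hτ y)
  have hD2 : (gr τ) ((gr σ) y - y) - ((gr σ) y - y) ∈ 𝔪 ^ (1 + 2) :=
    deriv_mem hπ hτ 2 _ (hσ y)
  have hkey : (gr (σ * τ * σ⁻¹ * τ⁻¹)) x - x
      = ((gr σ) ((gr τ) y - y) - ((gr τ) y - y))
        - ((gr τ) ((gr σ) y - y) - ((gr σ) y - y)) := by
    rw [hx1, ← hx2, map_sub, map_sub]
    ring
  rw [hkey]
  exact Ideal.sub_mem _ hD1 hD2

lemma comm_of_ram_one {π : 𝒪} (hπ : 𝔪 = Ideal.span {π})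
    (hweak : ∀ σ' ∈ ramificationSet p F E 2, σ' = 1) {σ τ : E ≃ₐ[F] E}
    (hσ : σ ∈ ramificationSet p F E 1) (hτ : τ ∈ ramificationSet p F E 1) :
    σ * τ = τ * σ := by
  have h := hweak _ (commutator_mem hπ hσ hτ)
  have h2 : σ * τ * σ⁻¹ = τ := by
    rw [← mul_inv_eq_one]
    simpa [mul_assoc] using h
  calc σ * τ = (σ * τ * σ⁻¹) * σ := by group
  _ = τ * σ := by rw [h2]

/-! ### `p`-th powers -/

lemma pow_p_mem_two {π : 𝒪} (hπ : 𝔪 = Ideal.span {π})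
    (hfrob : ∀ x : 𝒪, ∃ y : 𝒪, x - y ^ p ∈ 𝔪)
    {γ : E ≃ₐ[F] E} (hγ : γ ∈ ramificationSet p F E 1) :
    γ ^ p ∈ ramificationSet p F E 2 := by
  have hγ' := mem_ram_iff.mp hγ
  set δ := (gr γ) π - π with hδdef
  have hδ : δ ∈ 𝔪 ^ 2 := hγ' π
  have claim : ∀ k : ℕ, (gr (γ ^ k)) π - π - (k : 𝒪) * δ ∈ 𝔪 ^ 3 := by
    intro k
    induction k with
    | zero => simp [gr_one, pow_zero]
    | succ k ih =>
      have hsp : γ ^ (k+1) = γ * γ ^ k := by rw [pow_succ']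
      rw [hsp, gr_mul]
      set e := (gr (γ ^ k)) π - π - (k : 𝒪) * δ with he
      have hgk : (gr (γ ^ k)) π = π + (k : 𝒪) * δ + e := by rw [he]; ring
      rw [hgk]
      have hexp : (gr γ) (π + (k : 𝒪) * δ + e)
          = (gr γ) π + (k : 𝒪) * (gr γ) δ + (gr γ) e := by
        rw [map_add, map_add, map_mul, map_natCast]
      rw [hexp]
      have h1 : (gr γ) δ - δ ∈ 𝔪 ^ (1 + 2) := deriv_mem hπ hγ' 2 _ hδ
      have h2 : (gr γ) e ∈ 𝔪 ^ 3 := gr_mem_pow hπ γ ih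
      have hkey : (gr γ) π + (k : 𝒪) * (gr γ) δ + (gr γ) e - π - ((k : ℕ) + 1 : 𝒪) * δ
          = (k : 𝒪) * ((gr γ) δ - δ) + (gr γ) e := by
        rw [hδdef]; ring
      have hmem : (k : 𝒪) * ((gr γ) δ - δ) + (gr γ) e ∈ 𝔪 ^ 3 :=
        Ideal.add_mem _ (Ideal.mul_mem_left _ _ h1) h2
      have : ((k+1 : ℕ) : 𝒪) = ((k : ℕ) + 1 : 𝒪) := by push_cast; ring
      rw [this, hkey]
      exact hmem
  have hfin : (gr (γ ^ p)) π - π ∈ 𝔪 ^ 3 := by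
    have h1 := claim p
    have h2 : (p : 𝒪) * δ ∈ 𝔪 ^ 3 := by
      have h := Ideal.mul_mem_mul (p_mem_m (p := p) (E := E)) hδ
      have h3 : 𝔪 * 𝔪 ^ 2 = 𝔪 ^ 3 := by ring
      rwa [h3] at h
    have : (gr (γ ^ p)) π - π = ((gr (γ ^ p)) π - π - (p : 𝒪) * δ) + (p : 𝒪) * δ := by ring
    rw [this]
    exact Ideal.add_mem _ h1 h2
  have hγp : γ ^ p ∈ ramificationSet p F E 1 := pow_mem_ram hγ p
  rw [mem_ram_iff]
  exact step_up hπ hfrob (mem_ram_iff.mp hγp) hfin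

/-! ### Conjugation forces descent -/

lemma conj_down {π : 𝒪} (hπ : 𝔪 = Ideal.span {π})
    (hfrob : ∀ x : 𝒪, ∃ y : 𝒪, x - y ^ p ∈ 𝔪)
    (hweak : ∀ σ' ∈ ramificationSet p F E 2, σ' = 1)
    {σ τ : E ≃ₐ[F] E} (hσ0 : σ ∈ ramificationSet p F E 0)
    (hτ : τ ∈ ramificationSet p F E 1) (hτne : τ ≠ 1)
    (hcomm : σ * τ = τ * σ) : σ ∈ ramificationSet p F E 1 := by
  have hσ' := mem_ram_iff.mp hσ0
  have hτ' := mem_ram_iff.mp hτ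
  set δ := (gr τ) π - π with hδdef
  have hδ2 : δ ∈ 𝔪 ^ 2 := hτ' π
  have hδ3 : δ ∉ 𝔪 ^ 3 := by
    intro h3
    apply hτne
    apply hweak
    rw [mem_ram_iff]
    exact step_up hπ hfrob hτ' h3
  obtain ⟨c, hc⟩ := (mem_pow_iff hπ).mp hδ2
  have hcm : c ∉ 𝔪 := by
    intro hcm
    apply hδ3
    rw [hc]
    have h := Ideal.mul_mem_mul (Ideal.pow_mem_pow (pi_mem hπ) 2) hcm
    have hmm : 𝔪 ^ 2 * 𝔪 = 𝔪 ^ 3 := by ring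
    rwa [hmm] at h
  have hgrπ : (gr σ) π ∈ 𝔪 ^ 1 := by rw [pow_one]; exact gr_mem_m σ (pi_mem hπ)
  obtain ⟨u, hu⟩ := (mem_pow_iff hπ).mp hgrπ
  rw [pow_one] at hu
  have hum : u ∉ 𝔪 := by
    intro hum
    have h2 : (gr σ) π ∈ 𝔪 ^ 2 := by
      rw [hu]
      have h := Ideal.mul_mem_mul (pi_mem hπ) hum
      have hmm : 𝔪 * 𝔪 = 𝔪 ^ 2 := by ring
      rwa [hmm] at h
    have h3 : π ∈ 𝔪 ^ 2 := by
      have h := gr_mem_pow hπ σ⁻¹ h2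
      rwa [← gr_mul, inv_mul_cancel, gr_one] at h
    obtain ⟨w, hw⟩ := (mem_pow_iff hπ).mp h3
    have hcancel : π * 1 = π * (π * w) := by
      have : π = π ^ 2 * w := hw
      linear_combination this
    have := mul_left_cancel₀ (pi_ne_zero hπ) hcancel
    exact pi_not_unit hπ (IsUnit.of_mul_eq_one w this.symm)
  -- the commutation equation
  have hEq := congrArg (fun α : E ≃ₐ[F] E => (gr α) π) hcomm
  simp only [] at hEq
  rw [gr_mul, gr_mul] at hEq
  -- expand both sides
  set A := (gr τ) u - u with hA
  set B := (gr σ) c - c with hB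
  have hAm : A ∈ 𝔪 ^ 2 := hτ' u
  have hBm : B ∈ 𝔪 := by simpa using hσ' c
  have hτπ : (gr τ) π = π + δ := by rw [hδdef]; ring
  have hτu : (gr τ) u = u + A := by rw [hA]; ring
  have hσc : (gr σ) c = c + B := by rw [hB]; ring
  have hgrδ : (gr σ) δ = (π * u) ^ 2 * ((gr σ) c) := by
    rw [hc, map_mul, map_pow, hu]
  have l1 : (gr τ) ((gr σ) π) = (π + δ) * (u + A) := by
    rw [hu, map_mul, hτπ, hτu]
  have l2 : (gr σ) ((gr τ) π) = π * u + (π * u) ^ 2 * (c + B) := by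
    rw [hτπ, map_add, hu, hgrδ, hσc]
  have e1 : π * u + (π * u) ^ 2 * (c + B) = (π + δ) * (u + A) := by
    rw [← l1, ← l2, hEq]
  have hgoal3 : u * c * π ^ 2 - u ^ 2 * c * π ^ 2 ∈ 𝔪 ^ 3 := by
    have hid : u * c * π ^ 2 - u ^ 2 * c * π ^ 2
        = π ^ 2 * u ^ 2 * B - π * A - δ * A := by
      linear_combination -e1 - u * hc
    rw [hid]
    refine Ideal.sub_mem _ (Ideal.sub_mem _ ?_ ?_) ?_
    · have h1 : π ^ 2 * u ^ 2 ∈ 𝔪 ^ 2 :=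
        Ideal.mul_mem_right _ _ (Ideal.pow_mem_pow (pi_mem hπ) 2)
      have h := Ideal.mul_mem_mul h1 hBm
      have hmm : 𝔪 ^ 2 * 𝔪 = 𝔪 ^ 3 := by ring
      rwa [hmm] at h
    · have h := Ideal.mul_mem_mul (pi_mem hπ) hAm
      have h3 : 𝔪 * 𝔪 ^ 2 = 𝔪 ^ 3 := by ring
      rwa [h3] at h
    · have h := Ideal.mul_mem_mul hδ2 hAm
      have h4 : 𝔪 ^ 2 * 𝔪 ^ 2 = 𝔪 ^ 4 := by ring
      rw [h4] at h
      exact Ideal.pow_le_pow_right (by omega) h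
  have hg2 : π ^ 2 * (u * c - u ^ 2 * c) ∈ 𝔪 ^ 3 := by
    have hre : π ^ 2 * (u * c - u ^ 2 * c) = u * c * π ^ 2 - u ^ 2 * c * π ^ 2 := by ring
    rwa [hre]
  obtain ⟨w, hw⟩ := (mem_pow_iff hπ).mp hg2
  have hfac : u * c - u ^ 2 * c = π * w := by
    apply mul_left_cancel₀ (pow_ne_zero 2 (pi_ne_zero hπ))
    calc π ^ 2 * (u * c - u ^ 2 * c) = π ^ 3 * w := hw
    _ = π ^ 2 * (π * w) := by ring
  have hmem : u * c * (1 - u) ∈ 𝔪 := by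
    have hre : u * c * (1 - u) = u * c - u ^ 2 * c := by ring
    rw [hre, hfac]
    exact Ideal.mul_mem_right _ _ (pi_mem hπ)
  have hprime : (𝔪).IsPrime := Ideal.IsMaximal.isPrime (IsLocalRing.maximalIdeal.isMaximal _)
  have h1u : (1 : 𝒪) - u ∈ 𝔪 := by
    rcases hprime.mem_or_mem hmem with h | h
    · rcases hprime.mem_or_mem h with h' | h'
      · exact absurd h' hum
      · exact absurd h' hcm
    · exact h
  have hπσ : (gr σ) π - π ∈ 𝔪 ^ (0 + 2) := by
    have hre : (gr σ) π - π = π * (u - 1) := by rw [hu]; ring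
    rw [hre]
    have hu1 : u - 1 ∈ 𝔪 := by
      have := neg_mem h1u
      rwa [neg_sub] at this
    have h := Ideal.mul_mem_mul (pi_mem hπ) hu1
    have hmm : 𝔪 * 𝔪 = 𝔪 ^ (0 + 2) := by ring
    rwa [hmm] at h
  rw [mem_ram_iff]
  exact step_up hπ hfrob hσ' hπσ


/-! ### The two directions of the main theorem -/

lemma main_forward
    (hweak : ∀ σ ∈ ramificationSet p F E 2, σ = 1)
    (habel : ∀ σ ∈ ramificationSet p F E 0, ∀ τ ∈ ramificationSet p F E 0, σ * τ = τ * σ) :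
    (((∃ k : ℕ, (ramificationSet p F E 0).ncard = p ^ k) ∧
        ramificationSet p F E 0 = ramificationSet p F E 1) ∨
      ((∃ g ∈ ramificationSet p F E 0,
          ∀ τ ∈ ramificationSet p F E 0, ∃ n : ℤ, τ = g ^ n) ∧
        Nat.Coprime (ramificationSet p F E 0).ncard p)) := by
  classical
  obtain ⟨π, hπ⟩ := exists_uniformizer (p := p) (E := E)
  have hfrob := frob_surj (p := p) (E := E)
  haveI hκfin := finite_residue (p := p) (E := E)
  haveI hκchar := charP_residue (p := p) (E := E)
  let G0 : Subgroup (E ≃ₐ[F] E) :=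
    { carrier := ramificationSet p F E 0
      mul_mem' := fun ha hb => mul_mem_ram ha hb
      one_mem' := one_mem_ram 0
      inv_mem' := fun ha => inv_mem_ram ha }
  have hcard : (ramificationSet p F E 0).ncard = Nat.card G0 := by
    rw [← Nat.card_coe_set_eq]
    rfl
  by_cases hG1 : ∀ τ ∈ ramificationSet p F E 1, τ = 1
  · right
    have hex : ∀ σ : E ≃ₐ[F] E, ∃ u : 𝒪, (gr σ) π = π * u := by
      intro σ
      have hgrπ : (gr σ) π ∈ 𝔪 ^ 1 := by
        rw [pow_one]; exact gr_mem_m σ (pi_mem hπ)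
      obtain ⟨u, hu⟩ := (mem_pow_iff hπ).mp hgrπ
      rw [pow_one] at hu
      exact ⟨u, hu⟩
    choose u hu using hex
    have hπne := pi_ne_zero hπ
    have humul : ∀ σ τ : E ≃ₐ[F] E, u (σ * τ) = (gr σ) (u τ) * u σ := by
      intro σ τ
      apply mul_left_cancel₀ hπne
      calc π * u (σ * τ) = (gr (σ * τ)) π := (hu _).symm
      _ = (gr σ) ((gr τ) π) := gr_mul σ τ π
      _ = (gr σ) (π * u τ) := by rw [hu]
      _ = (π * u σ) * (gr σ) (u τ) := by rw [map_mul, hu]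
      _ = π * ((gr σ) (u τ) * u σ) := by ring
    have huone : u 1 = 1 := by
      apply mul_left_cancel₀ hπne
      calc π * u 1 = (gr (1 : E ≃ₐ[F] E)) π := (hu _).symm
      _ = π := gr_one π
      _ = π * 1 := by ring
    have hres : ∀ (σ : E ≃ₐ[F] E), σ ∈ ramificationSet p F E 0 →
        ∀ x : 𝒪, ρ ((gr σ) x) = ρ x := by
      intro σ hσ x
      have h := mem_ram_iff.mp hσ x
      rw [pow_one] at h
      exact Ideal.Quotient.eq.mpr h
    let Θ : G0 →* 𝕜 :=
      { toFun := fun σ => ρ (u σ.1)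
        map_one' := by
          show ρ (u 1) = 1
          rw [huone, map_one]
        map_mul' := by
          intro σ τ
          show ρ (u (σ.1 * τ.1)) = ρ (u σ.1) * ρ (u τ.1)
          rw [humul, map_mul, hres σ.1 σ.2]
          ring }
    have hker : ∀ σ : G0, Θ σ = 1 → σ = 1 := by
      intro σ hσ
      have h1 : u σ.1 - 1 ∈ 𝔪 := by
        have h2 : ρ (u σ.1) = ρ 1 := by
          show Θ σ = ρ 1
          rw [hσ, map_one]
        exact Ideal.Quotient.eq.mp h2
      have hπσ : (gr σ.1) π - π ∈ 𝔪 ^ (0 + 2) := by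
        have hre : (gr σ.1) π - π = π * (u σ.1 - 1) := by rw [hu]; ring
        rw [hre]
        have h := Ideal.mul_mem_mul (pi_mem hπ) h1
        have hmm : 𝔪 * 𝔪 = 𝔪 ^ (0 + 2) := by ring
        rwa [hmm] at h
      have hσ1 : σ.1 ∈ ramificationSet p F E 1 := by
        rw [mem_ram_iff]
        have hσ' := mem_ram_iff.mp σ.2
        exact step_up hπ hfrob hσ' hπσ
      exact Subtype.ext (hG1 σ.1 hσ1)
    have hΘinj : Function.Injective Θ := by
      intro σ τ h
      have h1 : Θ (σ * τ⁻¹) = 1 := by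
        rw [map_mul, h, ← map_mul, mul_inv_cancel, map_one]
      have := hker _ h1
      rwa [mul_inv_eq_one] at this
    haveI : Finite G0 := inferInstance
    haveI : IsCyclic G0 := isCyclic_of_subgroup_isDomain Θ hΘinj
    obtain ⟨g, hg⟩ := IsCyclic.exists_generator (α := G0)
    constructor
    · refine ⟨g.1, g.2, fun τ hτ => ?_⟩
      obtain ⟨n, hn⟩ := Subgroup.mem_zpowers_iff.mp (hg ⟨τ, hτ⟩)
      exact ⟨n, by simpa using congrArg Subtype.val hn.symm⟩
    · rw [hcard]
      rw [Nat.coprime_comm]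
      apply (Nat.Prime.coprime_iff_not_dvd Fact.out).mpr
      intro hdvd
      haveI : Fintype G0 := Fintype.ofFinite _
      rw [Nat.card_eq_fintype_card] at hdvd
      obtain ⟨σ, hord⟩ := exists_prime_orderOf_dvd_card p hdvd
      have hσp : σ ^ p = 1 := by
        rw [← hord]; exact pow_orderOf_eq_one σ
      have ha : (Θ σ) ^ p = 1 := by
        rw [← map_pow, hσp, map_one]
      have ha1 : Θ σ = 1 := by
        have h2 : (Θ σ - 1) ^ p = 0 := by
          rw [sub_pow_char, ha, one_pow, sub_self]
        have h3 := pow_eq_zero_iff (Nat.Prime.ne_zero (Fact.out : p.Prime)) |>.mp h2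
        have := sub_eq_zero.mp h3
        exact this
      have hone : σ = 1 := hker σ ha1
      rw [hone, orderOf_one] at hord
      exact Nat.Prime.ne_one Fact.out hord.symm
  · left
    push_neg at hG1
    obtain ⟨τ, hτ1, hτne⟩ := hG1
    have hsub : ramificationSet p F E 0 ⊆ ramificationSet p F E 1 := by
      intro σ hσ
      exact conj_down hπ hfrob hweak hσ hτ1 hτne
        (habel σ hσ τ (ram_le (by omega) hτ1))
    have heq : ramificationSet p F E 0 = ramificationSet p F E 1 :=
      Set.Subset.antisymm hsub (ram_le (by omega))
    refine ⟨?_, heq⟩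
    have hpow : ∀ σ : E ≃ₐ[F] E, σ ∈ ramificationSet p F E 0 → σ ^ p = 1 := by
      intro σ hσ
      exact hweak _ (pow_p_mem_two hπ hfrob (hsub hσ))
    rw [hcard]
    haveI : Finite G0 := inferInstance
    have hpos : Nat.card G0 ≠ 0 := Nat.card_pos.ne'
    refine ⟨(Nat.card G0).primeFactorsList.length, ?_⟩
    apply Nat.eq_prime_pow_of_unique_prime_dvd hpos
    intro q hq hdvd
    haveI : Fintype G0 := Fintype.ofFinite _
    rw [Nat.card_eq_fintype_card] at hdvd
    haveI : Fact q.Prime := ⟨hq⟩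
    obtain ⟨σ, hord⟩ := exists_prime_orderOf_dvd_card q hdvd
    have hσp : σ ^ p = 1 := by
      apply Subtype.ext
      have := hpow σ.1 σ.2
      simpa using this
    have hqp : q ∣ p := hord ▸ orderOf_dvd_of_pow_eq_one hσp
    exact (Nat.prime_dvd_prime_iff_eq hq Fact.out).mp hqp

lemma main_backward
    (hweak : ∀ σ ∈ ramificationSet p F E 2, σ = 1)
    (h : ((∃ k : ℕ, (ramificationSet p F E 0).ncard = p ^ k) ∧
        ramificationSet p F E 0 = ramificationSet p F E 1) ∨
      ((∃ g ∈ ramificationSet p F E 0,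
          ∀ τ ∈ ramificationSet p F E 0, ∃ n : ℤ, τ = g ^ n) ∧
        Nat.Coprime (ramificationSet p F E 0).ncard p)) :
    ∀ σ ∈ ramificationSet p F E 0, ∀ τ ∈ ramificationSet p F E 0, σ * τ = τ * σ := by
  obtain ⟨π, hπ⟩ := exists_uniformizer (p := p) (E := E)
  rcases h with ⟨_, heq⟩ | ⟨⟨g, hg, hgen⟩, _⟩
  · intro σ hσ τ hτ
    exact comm_of_ram_one hπ hweak (heq ▸ hσ) (heq ▸ hτ)
  · intro σ hσ τ hτ
    obtain ⟨m, hm⟩ := hgen σ hσ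
    obtain ⟨n, hn⟩ := hgen τ hτ
    subst hm hn
    rw [← zpow_add, ← zpow_add, add_comm]

end RamAux

/-- If `E/F` is a weakly ramified finite Galois extension of `p`-adic fields
of odd degree, with inertia subgroup `Δ = Γ₀` and first ramification group `Γ₁`, then `Δ` is
abelian if and only if it is either a `p`-group (in which case `Δ = Γ₁`) or cyclic of order
prime to `p`. -/
theorem inertia_abelian_iff_of_weaklyRamified
    (p : ℕ) [Fact p.Prime] (F E : Type) [Field F] [Field E]
    [Algebra ℚ_[p] F] [FiniteDimensional ℚ_[p] F]
    [Algebra ℚ_[p] E] [FiniteDimensional ℚ_[p] E]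
    [Algebra ℤ_[p] E] [IsScalarTower ℤ_[p] ℚ_[p] E]
    [Algebra F E] [IsScalarTower ℚ_[p] F E]
    [FiniteDimensional F E] [IsGalois F E]
    [IsLocalRing (integralClosure ℤ_[p] E)]
    (hodd : Odd (Module.finrank F E))
    (hweak : ∀ σ ∈ ramificationSet p F E 2, σ = 1) :
    (∀ σ ∈ ramificationSet p F E 0, ∀ τ ∈ ramificationSet p F E 0, σ * τ = τ * σ) ↔
      (((∃ k : ℕ, (ramificationSet p F E 0).ncard = p ^ k) ∧
          ramificationSet p F E 0 = ramificationSet p F E 1) ∨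
        ((∃ g ∈ ramificationSet p F E 0,
            ∀ τ ∈ ramificationSet p F E 0, ∃ n : ℤ, τ = g ^ n) ∧
          Nat.Coprime (ramificationSet p F E 0).ncard p)) :=
  ⟨RamAux.main_forward hweak, RamAux.main_backward hweak⟩
end

section
/- Let p be a prime, let k be a field of characteristic p, let Γ be a finite p-group of order m, let ρ : Γ → GL_n(k) be a group homomorphism with n ≤ m, and let c : Γ → k be any function. Then ( Σ_{γ ∈ Γ} c(γ) · ρ(γ) )^m = ( Σ_{γ ∈ Γ} c(γ) )^m · I_n, where I_n is the n×n identity matrix. -/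
open Matrix

open MonoidAlgebra Finsupp in
-- single-step: single γ c - single (σ (π γ)) c ∈ (of z - 1) * A
private lemma step1 {k Γ : Type} [Field k] [Group Γ] {p : ℕ} {z : Γ} (hz : z ∈ Subgroup.center Γ) (hord : orderOf z = p) (hp : 0 < p)
    (γ : Γ) (c : k) :
    ∃ a : MonoidAlgebra k Γ,
      MonoidAlgebra.single γ c
        - MonoidAlgebra.single ((QuotientGroup.mk γ : Γ ⧸ Subgroup.zpowers z).out) c
      = ((MonoidAlgebra.of k Γ z) - 1) * a := by
  obtain ⟨h, hh⟩ := QuotientGroup.mk_out_eq_mul (Subgroup.zpowers z) γ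
  obtain ⟨i, hi⟩ := h.2
  -- (h : Γ) = z ^ i  with i : ℤ ; replace by natural power
  set nn : ℕ := (i % (p : ℤ)).toNat with hnn
  have hzn : (h : Γ) = z ^ nn := by
    rw [← hi, hnn]
    rw [← zpow_natCast, Int.toNat_of_nonneg (Int.emod_nonneg i (by exact_mod_cast hp.ne'))]
    conv_rhs => rw [← hord]
    rw [zpow_mod_orderOf]
  rw [hh, hzn]
  -- now: single γ c - single (γ * z^nn) c = (of z - 1) * a
  have e1 : (MonoidAlgebra.single (γ * z ^ nn) c : MonoidAlgebra k Γ)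
      = MonoidAlgebra.single γ c * (MonoidAlgebra.of k Γ z) ^ nn := by
    rw [← _root_.map_pow]
    simp [MonoidAlgebra.single_mul_single]
  refine ⟨-(MonoidAlgebra.single γ c * ∑ j ∈ Finset.range nn, (MonoidAlgebra.of k Γ z) ^ j), ?_⟩
  have hcom : ∀ b : MonoidAlgebra k Γ, Commute (MonoidAlgebra.of k Γ z) b := by
    intro b
    induction b using MonoidAlgebra.induction_on with
    | of g =>
        show MonoidAlgebra.of k Γ z * MonoidAlgebra.of k Γ g = _
        rw [← _root_.map_mul, ← _root_.map_mul, (Subgroup.mem_center_iff.mp hz g)]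
    | add f g hf hg => exact hf.add_right hg
    | smul r f hf => exact hf.smul_right r
  have hcom1 : ∀ b : MonoidAlgebra k Γ, ((MonoidAlgebra.of k Γ z) - 1) * b
      = b * ((MonoidAlgebra.of k Γ z) - 1) := by
    intro b; exact (((hcom b).sub_left (Commute.one_left b))).eq
  rw [e1, mul_neg, hcom1, mul_assoc, geom_sum_mul, mul_sub, mul_one, neg_sub]

open MonoidAlgebra Finsupp in
private lemma ker_step {k Γ : Type} [Field k] [Group Γ] {p : ℕ} {z : Γ} (hz : z ∈ Subgroup.center Γ) (hord : orderOf z = p) (hp : 0 < p)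
    [(Subgroup.zpowers z).Normal]
    (f : MonoidAlgebra k Γ)
    (hf : MonoidAlgebra.mapDomainAlgHom k k (QuotientGroup.mk' (Subgroup.zpowers z)) f = 0) :
    ∃ a : MonoidAlgebra k Γ, f = ((MonoidAlgebra.of k Γ z) - 1) * a := by
  classical
  set H := Subgroup.zpowers z
  set π : Γ → Γ ⧸ H := QuotientGroup.mk
  set σ : Γ ⧸ H → Γ := Quotient.out
  set T : MonoidAlgebra k Γ → MonoidAlgebra k Γ := fun g => MonoidAlgebra.mapDomain (σ ∘ π) g with hT
  have hmd : T f = 0 := by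
    show MonoidAlgebra.ofCoeff (Finsupp.mapDomain (σ ∘ π) f.coeff) = 0
    rw [Finsupp.mapDomain_comp]
    have : Finsupp.mapDomain π f.coeff = 0 := congrArg MonoidAlgebra.coeff hf
    rw [this, Finsupp.mapDomain_zero]; rfl
  -- f - mapDomain (σ ∘ π) f ∈ (of z - 1) * A
  have Tadd : ∀ g h : MonoidAlgebra k Γ, T (g + h) = T g + T h := fun g h =>
    MonoidAlgebra.mapDomain_add _ _ _
  have Tsmul : ∀ (r : k) (g : MonoidAlgebra k Γ), T (r • g) = r • T g := fun r g =>
    MonoidAlgebra.mapDomain_smul _ r g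
  have key : ∀ g : MonoidAlgebra k Γ, ∃ a, g - T g = ((MonoidAlgebra.of k Γ z) - 1) * a := by
    intro g
    induction g using MonoidAlgebra.induction_on with
    | of γ =>
        obtain ⟨b, hb⟩ := step1 (k := k) hz hord hp γ 1
        refine ⟨b, ?_⟩
        have hTof : T (MonoidAlgebra.of k Γ γ) = MonoidAlgebra.single (σ (π γ)) 1 :=
          MonoidAlgebra.mapDomain_single
        rw [hTof]
        exact hb
    | add g h hg hh =>
        obtain ⟨a, ha⟩ := hg
        obtain ⟨b, hb⟩ := hh
        refine ⟨a + b, ?_⟩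
        rw [Tadd, mul_add, ← ha, ← hb]
        abel
    | smul r g hg =>
        obtain ⟨a, ha⟩ := hg
        refine ⟨r • a, ?_⟩
        rw [Tsmul, ← smul_sub, ha, mul_smul_comm]
  obtain ⟨a, ha⟩ := key f
  exact ⟨a, by rw [← ha, hmd, sub_zero]⟩

open MonoidAlgebra in
private lemma aug_nilpotent (p : ℕ) [Fact p.Prime] (k : Type) [Field k] [CharP k p] :
    ∀ (N : ℕ) (Γ : Type) [Group Γ] [Fintype Γ], Fintype.card Γ = N → IsPGroup p Γ →
    ∀ x ∈ Submodule.span k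
      (Set.range fun γ : Γ => (MonoidAlgebra.of k Γ γ : MonoidAlgebra k Γ) - 1),
      IsNilpotent x := by
  intro N
  induction N using Nat.strong_induction_on with
  | _ N IH =>
    intro Γ _ _ hcard hΓ x hx
    have hNpos : 1 ≤ N := hcard ▸ Fintype.card_pos
    rcases eq_or_lt_of_le hNpos with h1 | h1
    · -- card Γ = 1 : trivial group, all generators are 0
      haveI : Subsingleton Γ :=
        Fintype.card_le_one_iff_subsingleton.mp (by rw [hcard, ← h1])
      have hgen : (Set.range fun γ : Γ => (MonoidAlgebra.of k Γ γ : MonoidAlgebra k Γ) - 1)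
          ⊆ (⊥ : Submodule k (MonoidAlgebra k Γ)) := by
        rintro _ ⟨γ, rfl⟩
        have hγ : γ = 1 := Subsingleton.elim _ _
        simp only [hγ, _root_.map_one, sub_self, SetLike.mem_coe, Submodule.zero_mem]
      have hx0 : x = 0 := Submodule.mem_bot k |>.mp (Submodule.span_le.mpr hgen hx)
      exact hx0 ▸ IsNilpotent.zero
    · -- nontrivial case
      haveI : Nontrivial Γ := Fintype.one_lt_card_iff_nontrivial.mp (by rw [hcard]; exact h1)
      have hp : p.Prime := Fact.out
      haveI := hΓ.center_nontrivial
      have hcenter : IsPGroup p (Subgroup.center Γ) := hΓ.to_subgroup _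
      obtain ⟨e, he⟩ := IsPGroup.iff_card.mp hcenter
      haveI : Fintype (Subgroup.center Γ) := Fintype.ofFinite _
      have hedvd : p ∣ Nat.card (Subgroup.center Γ) := by
        rw [he]
        refine dvd_pow_self p ?_
        rintro rfl
        rw [pow_zero, Nat.card_eq_fintype_card] at he
        exact (Fintype.one_lt_card).ne' he
      obtain ⟨z', hz'⟩ := exists_prime_orderOf_dvd_card' p hedvd
      set z : Γ := (z' : Γ) with hzdef
      have hzc : z ∈ Subgroup.center Γ := z'.2
      have hord : orderOf z = p := by rw [hzdef, Subgroup.orderOf_coe, hz']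
      haveI hnorm : (Subgroup.zpowers z).Normal := by
        constructor
        rintro g ⟨i, rfl⟩ γ
        have hcg : γ * z ^ i = z ^ i * γ :=
          (Commute.zpow_right (show Commute γ z from Subgroup.mem_center_iff.mp hzc γ) i)
        show γ * z ^ i * γ⁻¹ ∈ _
        rw [hcg, mul_assoc, mul_inv_cancel, mul_one]
        exact ⟨i, rfl⟩
      set Q := Γ ⧸ Subgroup.zpowers z with hQ
      haveI : Fintype Q := Fintype.ofFinite Q
      have hcardQ : Fintype.card Q < N := by
        have h := Subgroup.card_eq_card_quotient_mul_card_subgroup (Subgroup.zpowers z)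
        rw [Nat.card_eq_fintype_card, Nat.card_eq_fintype_card, Nat.card_zpowers, hord] at h
        rw [← hcard, h]
        have h2 : 1 < p := hp.one_lt
        have hQpos : 0 < Fintype.card Q := Fintype.card_pos
        nlinarith
      set φ := MonoidAlgebra.mapDomainAlgHom k k (QuotientGroup.mk' (Subgroup.zpowers z)) with hφ
      have hφx : φ x ∈ Submodule.span k
          (Set.range fun q : Q => (MonoidAlgebra.of k Q q : MonoidAlgebra k Q) - 1) := by
        have hmem := Submodule.apply_mem_span_image_of_mem_span (φ.toLinearMap) hx
        refine Submodule.span_mono ?_ hmem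
        rintro _ ⟨_, ⟨γ, rfl⟩, rfl⟩
        refine ⟨QuotientGroup.mk γ, ?_⟩
        show _ - _ = φ _
        rw [_root_.map_sub, _root_.map_one]
        congr 1
        exact Eq.symm MonoidAlgebra.mapDomain_single
      obtain ⟨M, hM⟩ := IH (Fintype.card Q) hcardQ Q rfl (hΓ.to_quotient _) (φ x) hφx
      have hker : φ (x ^ M) = 0 := by rw [_root_.map_pow, hM]
      obtain ⟨a, ha⟩ := ker_step hzc hord hp.pos (x ^ M) hker
      haveI : CharP (MonoidAlgebra k Γ) p := by
        refine charP_of_injective_algebraMap (R := k) (A := MonoidAlgebra k Γ) (fun r s hrs => ?_) p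
        have h2 : (MonoidAlgebra.single (1 : Γ) r : MonoidAlgebra k Γ)
            = MonoidAlgebra.single (1 : Γ) s := by
          simpa [MonoidAlgebra.coe_algebraMap] using hrs
        exact MonoidAlgebra.single_right_injective h2
      have hcom : ∀ b : MonoidAlgebra k Γ, Commute (MonoidAlgebra.of k Γ z) b := by
        intro b
        induction b using MonoidAlgebra.induction_on with
        | of g =>
            show MonoidAlgebra.of k Γ z * MonoidAlgebra.of k Γ g = _
            rw [← _root_.map_mul, ← _root_.map_mul, (Subgroup.mem_center_iff.mp hzc g)]
        | add f g hf hg => exact hf.add_right hg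
        | smul r f hf => exact hf.smul_right r
      have hzp : ((MonoidAlgebra.of k Γ z) - 1) ^ p = 0 := by
        rw [sub_pow_char_of_commute p (Commute.one_right _), ← _root_.map_pow, one_pow]
        have hz1 : z ^ p = 1 := by rw [← hord, pow_orderOf_eq_one]
        rw [hz1, _root_.map_one, sub_self]
      refine ⟨M * p, ?_⟩
      rw [pow_mul, ha, (Commute.mul_pow ((hcom a).sub_left (Commute.one_left a)) p), hzp,
        zero_mul]

open MonoidAlgebra in
/-- For a finite `p`-group `Γ` of order `m`, a field `k` of characteristic `p`,
a representation `ρ : Γ → GL_n(k)` with `n ≤ m`, and any function `c : Γ → k`, one has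
`(∑_γ c(γ) ρ(γ))^m = (∑_γ c(γ))^m · I_n`. -/
theorem pow_card_sum_smul_rep_of_pGroup
    (p n : ℕ) [Fact p.Prime] (k : Type) [Field k] [CharP k p]
    (Γ : Type) [Group Γ] [Fintype Γ] (hΓ : IsPGroup p Γ)
    (m : ℕ) (hm : Fintype.card Γ = m) (hn : n ≤ m)
    (ρ : Γ →* GL (Fin n) k) (c : Γ → k) :
    (∑ γ : Γ, c γ • (ρ γ : Matrix (Fin n) (Fin n) k)) ^ m =
      (∑ γ : Γ, c γ) ^ m • (1 : Matrix (Fin n) (Fin n) k) := by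
  rcases Nat.eq_zero_or_pos n with hn0 | hn0
  · subst hn0
    exact Subsingleton.elim _ _
  haveI : Nonempty (Fin n) := ⟨⟨0, hn0⟩⟩
  obtain ⟨e, he⟩ := IsPGroup.iff_card.mp hΓ
  have hme : m = p ^ e := by rw [← hm, ← Nat.card_eq_fintype_card, he]
  set S : Matrix (Fin n) (Fin n) k := ∑ γ : Γ, c γ • (ρ γ : Matrix (Fin n) (Fin n) k) with hS
  set s : k := ∑ γ : Γ, c γ with hs
  -- the element of the group algebra
  set x : MonoidAlgebra k Γ := ∑ γ : Γ, c γ • ((MonoidAlgebra.of k Γ γ) - 1) with hxdef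
  have hx : x ∈ Submodule.span k
      (Set.range fun γ : Γ => (MonoidAlgebra.of k Γ γ : MonoidAlgebra k Γ) - 1) := by
    refine Submodule.sum_mem _ fun γ _ => Submodule.smul_mem _ _ ?_
    exact Submodule.subset_span ⟨γ, rfl⟩
  have hnilx : IsNilpotent x := aug_nilpotent p k (Fintype.card Γ) Γ rfl hΓ x hx
  -- map to matrices
  set ψ : MonoidAlgebra k Γ →ₐ[k] Matrix (Fin n) (Fin n) k :=
    MonoidAlgebra.lift k (Matrix (Fin n) (Fin n) k) Γ
      ((Units.coeHom (Matrix (Fin n) (Fin n) k)).comp ρ) with hψ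
  have hψx : ψ x = S - s • 1 := by
    rw [hxdef, _root_.map_sum]
    have : ∀ γ : Γ, ψ (c γ • ((MonoidAlgebra.of k Γ γ) - 1))
        = c γ • ((ρ γ : Matrix (Fin n) (Fin n) k) - 1) := by
      intro γ
      rw [_root_.map_smul, _root_.map_sub, _root_.map_one, MonoidAlgebra.lift_of]
      rfl
    simp_rw [this, smul_sub, Finset.sum_sub_distrib, ← Finset.sum_smul]
    rfl
  have hnil : IsNilpotent (S - s • (1 : Matrix (Fin n) (Fin n) k)) := hψx ▸ hnilx.map ψ
  -- nilpotent matrix to the n-th power vanishes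
  have hpown : (S - s • (1 : Matrix (Fin n) (Fin n) k)) ^ n = 0 := by
    have h1 : (S - s • (1 : Matrix (Fin n) (Fin n) k)).charpoly = Polynomial.X ^ n := by
      have h2 := Matrix.isNilpotent_charpoly_sub_pow_of_isNilpotent hnil
      rw [← sub_eq_zero]
      simpa [Fintype.card_fin] using h2.eq_zero
    have h4 := Matrix.aeval_self_charpoly (S - s • (1 : Matrix (Fin n) (Fin n) k))
    rwa [h1, _root_.map_pow, Polynomial.aeval_X] at h4
  have hpowm : (S - s • (1 : Matrix (Fin n) (Fin n) k)) ^ m = 0 := by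
    rw [show m = n + (m - n) from (Nat.add_sub_cancel' hn).symm, pow_add, hpown, zero_mul]
  have hcomm : Commute (S - s • (1 : Matrix (Fin n) (Fin n) k))
      (s • (1 : Matrix (Fin n) (Fin n) k)) := (Commute.one_right _).smul_right s
  calc S ^ m = ((S - s • 1) + s • (1 : Matrix (Fin n) (Fin n) k)) ^ m := by
        rw [sub_add_cancel]
    _ = (S - s • 1) ^ m + (s • (1 : Matrix (Fin n) (Fin n) k)) ^ m := by
        rw [hme]
        exact add_pow_char_pow_of_commute _ _ hcomm
    _ = s ^ m • 1 := by rw [hpowm, zero_add, smul_pow, one_pow]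
end

section
/- Let p be a prime, let F be a finite extension of ℚ_p whose residue field has exactly p elements (for instance, a totally ramified finite extension of ℚ_p), with valuation ring O and maximal ideal 𝔭. Let Γ be a finite p-group, let T : Γ → GL_n(O) be a group homomorphism, and let c : Γ → O be any function. Then det( Σ_{γ ∈ Γ} c(γ) · T(γ) ) ≡ ( Σ_{γ ∈ Γ} c(γ) )ⁿ (mod 𝔭). -/
open Matrix

set_option synthInstance.maxHeartbeats 1000000
set_option maxHeartbeats 1000000

open Module

lemma aux_nilpotent (p : ℕ) [Fact p.Prime] (k : Type) [Field k] [Fintype k]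
    (hk : Fintype.card k = p)
    (Γ : Type) [Group Γ] [Fintype Γ] (hΓ : IsPGroup p Γ) :
    ∀ (m : ℕ) (V : Type) [AddCommGroup V] [Module k V] [FiniteDimensional k V],
      finrank k V = m → ∀ (ρ : Γ →* Module.End k V) (c : Γ → k),
      IsNilpotent (∑ γ : Γ, c γ • (ρ γ - 1)) := by
  intro m
  induction m using Nat.strong_induction_on with
  | _ m ih =>
    intro V _ _ _ hm ρ c
    rcases Nat.eq_zero_or_pos m with h0 | hpos
    · subst h0
      have : Subsingleton V := by
        rw [← finrank_zero_iff (R := k)]; omega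
      exact ⟨1, by ext v; exact Subsingleton.elim _ _⟩
    · set W : Submodule k V := ⨅ γ : Γ, LinearMap.ker (ρ γ - 1) with hW
      have memW : ∀ v : V, v ∈ W ↔ ∀ γ : Γ, ρ γ v = v := by
        intro v
        simp [hW, Submodule.mem_iInf, LinearMap.mem_ker, sub_eq_zero]
      letI : MulAction Γ V :=
        { smul := fun γ v => ρ γ v
          one_smul := fun v => by show ρ 1 v = v; simp
          mul_smul := fun γ δ v => by show ρ (γ * δ) v = ρ γ (ρ δ v); simp [_root_.map_mul] }
      have hfin : Finite V := Module.finite_of_finite k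
      have hcardV : Nat.card V = p ^ m := by
        have := Fintype.ofFinite V
        rw [Nat.card_eq_fintype_card, card_eq_pow_finrank (K := k) (V := V), hk, hm]
      have hmod := hΓ.card_modEq_card_fixedPoints V
      have hpV : p ∣ Nat.card V := by rw [hcardV]; exact dvd_pow_self p hpos.ne'
      have hdvd : p ∣ Nat.card (MulAction.fixedPoints Γ V) :=
        Nat.modEq_zero_iff_dvd.mp (hmod.symm.trans (Nat.modEq_zero_iff_dvd.mpr hpV))
      have hzero_mem : (0 : V) ∈ MulAction.fixedPoints Γ V := by
        intro γ; show ρ γ 0 = 0; simp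
      have hWne : W ≠ ⊥ := by
        intro hbot
        have hsub : MulAction.fixedPoints Γ V ⊆ {0} := by
          intro v hv
          have hvW : v ∈ W := (memW v).mpr (fun γ => hv γ)
          rw [hbot, Submodule.mem_bot] at hvW
          simp [hvW]
        have hle1 : Nat.card (MulAction.fixedPoints Γ V) ≤ 1 := by
          have := Set.ncard_le_ncard hsub (Set.finite_singleton 0)
          simpa [Nat.card_coe_set_eq, Set.ncard_singleton] using this
        have hpos' : 0 < Nat.card (MulAction.fixedPoints Γ V) := by
          have : Finite (MulAction.fixedPoints Γ V) := Subtype.finite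
          exact Nat.card_pos_iff.mpr ⟨⟨⟨0, hzero_mem⟩⟩, inferInstance⟩
        have hle := Nat.le_of_dvd hpos' hdvd
        have hp2 := (Fact.out : p.Prime).two_le
        omega
      have hWinv : ∀ γ : Γ, W ≤ W.comap (ρ γ) := by
        intro γ v hv
        rw [Submodule.mem_comap, (memW v).mp hv γ]
        exact hv
      let ρ' : Γ →* Module.End k (V ⧸ W) :=
        { toFun := fun γ => Submodule.mapQ W W (ρ γ) (hWinv γ)
          map_one' := by
            apply Submodule.linearMap_qext
            ext v
            simp [Submodule.mapQ_apply]
          map_mul' := fun γ δ => by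
            apply Submodule.linearMap_qext
            ext v
            simp [Submodule.mapQ_apply, _root_.map_mul, Module.End.mul_apply] }
      have hqlt : finrank k (V ⧸ W) < m := by
        have h1 : 0 < finrank k W :=
          Module.finrank_pos_iff.mpr (Submodule.nontrivial_iff_ne_bot.mpr hWne)
        have h2 := Submodule.finrank_quotient_add_finrank W
        omega
      obtain ⟨e, he⟩ := ih _ hqlt (V ⧸ W) rfl ρ' c
      set f : Module.End k V := ∑ γ : Γ, c γ • (ρ γ - 1) with hf
      set g : Module.End k (V ⧸ W) := ∑ γ : Γ, c γ • (ρ' γ - 1) with hg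
      have hcomm : (g : V ⧸ W →ₗ[k] V ⧸ W) ∘ₗ W.mkQ = W.mkQ ∘ₗ (f : V →ₗ[k] V) := by
        ext v
        simp [hf, hg, ρ', LinearMap.sum_apply, LinearMap.smul_apply, LinearMap.sub_apply,
          Submodule.mapQ_apply, map_sum, _root_.map_smul, map_sub]
      have hpow : ∀ j : ℕ, ((g ^ j : Module.End k (V ⧸ W)) : V ⧸ W →ₗ[k] V ⧸ W) ∘ₗ W.mkQ
          = W.mkQ ∘ₗ ((f ^ j : Module.End k V) : V →ₗ[k] V) := by
        intro j
        induction j with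
        | zero => simp [Module.End.one_eq_id]
        | succ j ihj =>
          rw [pow_succ, pow_succ, Module.End.mul_eq_comp, Module.End.mul_eq_comp,
            LinearMap.comp_assoc, hcomm, ← LinearMap.comp_assoc, ihj, LinearMap.comp_assoc]
      have hfW : ∀ w ∈ W, f w = 0 := by
        intro w hw
        have h := (memW w).mp hw
        simp [hf, LinearMap.sum_apply, LinearMap.smul_apply, LinearMap.sub_apply, h]
      refine ⟨e + 1, ?_⟩
      ext v
      have h1 : (f ^ e) v ∈ W := by
        rw [← Submodule.Quotient.mk_eq_zero]
        have := congrArg (fun φ => φ v) (hpow e)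
        simp only [LinearMap.comp_apply, Submodule.mkQ_apply] at this
        rw [← this, he]
        simp
      rw [pow_succ']
      simpa [Module.End.mul_apply] using hfW _ h1

lemma det_sum_smul_eq (p n : ℕ) [Fact p.Prime] (k : Type) [Field k] [Fintype k]
    (hk : Fintype.card k = p)
    (Γ : Type) [Group Γ] [Fintype Γ] (hΓ : IsPGroup p Γ)
    (B : Γ →* Matrix (Fin n) (Fin n) k) (c : Γ → k) :
    (∑ γ : Γ, c γ • B γ).det = (∑ γ : Γ, c γ) ^ n := by
  classical
  set e := Matrix.toLinAlgEquiv' (R := k) (n := Fin n) with he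
  let ρ : Γ →* Module.End k (Fin n → k) :=
    { toFun := fun γ => e (B γ)
      map_one' := by simp
      map_mul' := fun γ δ => by simp [_root_.map_mul] }
  have hnil := aux_nilpotent p k hk Γ hΓ (finrank k (Fin n → k)) (Fin n → k) rfl ρ c
  set M : Matrix (Fin n) (Fin n) k := ∑ γ : Γ, c γ • (B γ - 1) with hMdef
  have hMnil : IsNilpotent M := by
    have heq : e.symm (∑ γ : Γ, c γ • (ρ γ - 1)) = M := by
      rw [map_sum]
      refine Finset.sum_congr rfl (fun γ _ => ?_)
      rw [_root_.map_smul, map_sub, _root_.map_one]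
      simp [ρ]
    rw [← heq]
    exact hnil.map e.symm.toAlgHom
  set s : k := ∑ γ : Γ, c γ with hs
  have hchar : (-M).charpoly = Polynomial.X ^ n := by
    have h1 := Matrix.isNilpotent_charpoly_sub_pow_of_isNilpotent hMnil.neg
    rw [Fintype.card_fin] at h1
    have h2 := h1.eq_zero
    rwa [sub_eq_zero] at h2
  have hA : ∑ γ : Γ, c γ • B γ = s • (1 : Matrix (Fin n) (Fin n) k) + M := by
    rw [hMdef, hs, Finset.sum_smul, ← Finset.sum_add_distrib]
    refine Finset.sum_congr rfl (fun γ _ => ?_)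
    rw [← smul_add]
    congr 1
    abel
  have h4 : Polynomial.eval s ((-M).charpoly) = (s • (1 : Matrix (Fin n) (Fin n) k) + M).det := by
    rw [Matrix.charpoly, _root_.eval_det, matPolyEquiv_charmatrix]
    congr 1
    rw [Polynomial.eval_sub, Polynomial.eval_X, Polynomial.eval_C, sub_neg_eq_add]
    congr 1
    ext i j
    simp [Matrix.scalar_apply, Matrix.smul_apply, Matrix.one_apply, Matrix.diagonal_apply]
  rw [hA, ← h4, hchar]
  simp

/-- Let `F` be a finite extension of `ℚ_p` whose residue field has exactly `p`
elements, with valuation ring `O` (the integral closure of `ℤ_p` in `F`) and maximal ideal `𝔭`.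
For a finite `p`-group `Γ`, a representation `T : Γ → GL_n(O)` and any `c : Γ → O`, one has
`det(∑_γ c(γ) T(γ)) ≡ (∑_γ c(γ))^n (mod 𝔭)`. -/
theorem det_sum_smul_rep_congr_pow_sum_mod_maximalIdeal
    (p n : ℕ) [Fact p.Prime] (F : Type) [Field F]
    [Algebra ℚ_[p] F] [FiniteDimensional ℚ_[p] F]
    [Algebra ℤ_[p] F] [IsScalarTower ℤ_[p] ℚ_[p] F]
    [IsLocalRing (integralClosure ℤ_[p] F)]
    (hres : Nat.card (IsLocalRing.ResidueField (integralClosure ℤ_[p] F)) = p)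
    (Γ : Type) [Group Γ] [Fintype Γ] (hΓ : IsPGroup p Γ)
    (T : Γ →* GL (Fin n) (integralClosure ℤ_[p] F))
    (c : Γ → integralClosure ℤ_[p] F) :
    (∑ γ : Γ, c γ • (T γ : Matrix (Fin n) (Fin n) (integralClosure ℤ_[p] F))).det -
        (∑ γ : Γ, c γ) ^ n ∈ IsLocalRing.maximalIdeal (integralClosure ℤ_[p] F) := by
  letI : Fintype (IsLocalRing.ResidueField (integralClosure ℤ_[p] F)) :=
    @Fintype.ofFinite _ (Nat.finite_of_card_ne_zero (by
      rw [hres]; exact (Fact.out : p.Prime).pos.ne'))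
  have hk : Fintype.card (IsLocalRing.ResidueField (integralClosure ℤ_[p] F)) = p := by
    rw [← Nat.card_eq_fintype_card, hres]
  let B : Γ →* Matrix (Fin n) (Fin n) (IsLocalRing.ResidueField (integralClosure ℤ_[p] F)) :=
    (((IsLocalRing.residue (integralClosure ℤ_[p] F)).mapMatrix.toMonoidHom).comp
      (Units.coeHom (Matrix (Fin n) (Fin n) (integralClosure ℤ_[p] F)))).comp T
  have hdet := det_sum_smul_eq p n _ hk Γ hΓ B
    (fun γ => IsLocalRing.residue (integralClosure ℤ_[p] F) (c γ))
  have hmap : ((∑ γ : Γ, c γ • (T γ : Matrix (Fin n) (Fin n) (integralClosure ℤ_[p] F))).map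
        (IsLocalRing.residue (integralClosure ℤ_[p] F)))
      = ∑ γ : Γ, IsLocalRing.residue (integralClosure ℤ_[p] F) (c γ) • B γ := by
    ext i j
    simp [Matrix.map_apply, Matrix.sum_apply, Matrix.smul_apply, map_sum, B, smul_eq_mul]
  rw [← IsLocalRing.ker_residue, RingHom.mem_ker, map_sub, sub_eq_zero, RingHom.map_det,
    RingHom.mapMatrix_apply, hmap, hdet, map_pow, map_sum]
end
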